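/- For a monotone permutation π ∈ S_n starting at k, with dr(π) denoting the sum of all drops of π, one has (−1)^{dr(π)} = (−1)^{k−1} · sign(π). -/

import Mathlib

/-- A permutation `π` of `Fin n` (thought of as 1-based `S_n`) is *monotone* if for each
position `i`, either all earlier values are smaller, or all earlier values are larger. -/
def IsMonotonePerm {n : ℕ} (π : Equiv.Perm (Fin n)) : Prop :=
  ∀ i : Fin n, (∀ j : Fin n, j < i → π j < π i) ∨ (∀ j : Fin n, j < i → π i < π j)

/-- A (0-based) position `i` is a *drop* of `π` if `i ≥ 1` (1-based position `i + 1 ≥ 2`)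
and all earlier values are larger than `π i`. -/
def IsDrop {n : ℕ} (π : Equiv.Perm (Fin n)) (i : Fin n) : Prop :=
  0 < i.val ∧ ∀ j : Fin n, j < i → π i < π j

/-- `dr π` is the sum of the drops of `π`, as 1-based positions. -/
def dr {n : ℕ} (π : Equiv.Perm (Fin n)) : ℕ :=
  ∑ i ∈ Finset.univ.filter
      (fun i : Fin n => 0 < i.val ∧ ∀ j : Fin n, j < i → π i < π j), (i.val + 1)

open Equiv Finset

def castEquiv (n : ℕ) : Fin (n + 1) ≃ {i : Fin (n + 2) // i.val < n + 1} where
  toFun i := ⟨i.castSucc, i.isLt⟩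
  invFun i := ⟨i.1.val, i.2⟩
  left_inv i := rfl
  right_inv i := Subtype.ext (Fin.ext rfl)

lemma ext_apply {n : ℕ} (π' : Equiv.Perm (Fin (n + 1))) (i : Fin (n + 1)) :
    π'.extendDomain (castEquiv n) i.castSucc = (π' i).castSucc := by
  have := Equiv.Perm.extendDomain_apply_image π' (castEquiv n) i
  simpa [castEquiv] using this

lemma ext_last {n : ℕ} (π' : Equiv.Perm (Fin (n + 1))) :
    π'.extendDomain (castEquiv n) (Fin.last (n + 1)) = Fin.last (n + 1) :=
  Equiv.Perm.extendDomain_apply_not_subtype _ _ (by simp [Fin.last])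

lemma dr_eq_sum {n : ℕ} (π : Equiv.Perm (Fin n)) :
    dr π = ∑ i : Fin n,
      if (0 < i.val ∧ ∀ j : Fin n, j < i → π i < π j) then i.val + 1 else 0 :=
  Finset.sum_filter _ _

/-- For a monotone permutation `π ∈ S_n` (with `n ≥ 1`) starting at `k` (1-based
`k = (π 0).val + 1`, so `k - 1 = (π 0).val`), one has
`(-1)^{dr(π)} = (-1)^{k-1} · sign(π)`. -/
theorem neg_one_pow_dr_eq (n : ℕ) (π : Equiv.Perm (Fin (n + 1)))
    (h : IsMonotonePerm π) :
    ((-1 : ℤ)) ^ dr π = (-1 : ℤ) ^ (π 0).val * (Equiv.Perm.sign π : ℤ) := by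
  induction n with
  | zero =>
      have hπ : π = 1 := Equiv.ext fun i => Fin.ext (by omega)
      subst hπ
      simp [dr]
  | succ n ih =>
      rcases h (Fin.last (n + 1)) with hmax | hmin
      · -- last value is the maximum, so `π last = last`
        have hA : π (Fin.last (n + 1)) = Fin.last (n + 1) := by
          obtain ⟨j, hj⟩ := π.surjective (Fin.last (n + 1))
          rcases eq_or_lt_of_le (Fin.le_last j) with hj' | hj'
          · exact hj' ▸ hj
          · exact absurd (hj ▸ hmax j hj') (not_lt_of_ge (Fin.le_last _))
        have hlt : ∀ i : Fin (n + 1), (π i.castSucc).val < n + 1 := by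
          intro i
          have h1 : π i.castSucc ≠ Fin.last (n + 1) := by
            intro hc
            have := π.injective (hc.trans hA.symm)
            exact absurd this (Fin.castSucc_lt_last i).ne
          have h2 := (π i.castSucc).isLt
          have h3 : (π i.castSucc).val ≠ n + 1 := fun hc => h1 (Fin.ext hc)
          omega
        have hinj : Function.Injective
            (fun i : Fin (n + 1) => (⟨(π i.castSucc).val, hlt i⟩ : Fin (n + 1))) := by
          intro a b hab
          simp only [Fin.mk.injEq] at hab
          have : π a.castSucc = π b.castSucc := Fin.ext hab
          exact Fin.castSucc_injective _ (π.injective this)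
        set π' : Equiv.Perm (Fin (n + 1)) :=
          Equiv.ofBijective _ (Finite.injective_iff_bijective.mp hinj) with hπ'
        have hsucc : ∀ i : Fin (n + 1), π i.castSucc = (π' i).castSucc := by
          intro i; exact Fin.ext rfl
        have hmono' : IsMonotonePerm π' := by
          intro i
          rcases h i.castSucc with hc | hc
          · left; intro j hj
            have := hc j.castSucc (by simpa using hj)
            rw [hsucc, hsucc] at this
            simpa using this
          · right; intro j hj
            have := hc j.castSucc (by simpa using hj)
            rw [hsucc, hsucc] at this
            simpa using this
        have hdropiff : ∀ i : Fin (n + 1),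
            ((0 < (i.castSucc).val ∧
                ∀ j : Fin (n + 2), j < i.castSucc → π i.castSucc < π j)
              ↔ (0 < i.val ∧ ∀ j : Fin (n + 1), j < i → π' i < π' j)) := by
          intro i
          constructor
          · rintro ⟨h1, h2⟩
            refine ⟨h1, fun j hj => ?_⟩
            have := h2 j.castSucc (by simpa using hj)
            rw [hsucc, hsucc] at this
            simpa using this
          · rintro ⟨h1, h2⟩
            refine ⟨h1, fun j hj => ?_⟩
            have hjlt : j.val < n + 1 := by
              have := i.isLt
              have := hj
              rw [Fin.lt_def] at this
              simp at this
              omega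
            have hj2 : (⟨j.val, hjlt⟩ : Fin (n + 1)) < i := by
              rw [Fin.lt_def] at hj ⊢
              simpa using hj
            have hres := h2 ⟨j.val, hjlt⟩ hj2
            have hjc : j = Fin.castSucc ⟨j.val, hjlt⟩ := Fin.ext rfl
            rw [hjc, hsucc, hsucc]
            simpa using hres
        have hdr : dr π = dr π' := by
          rw [dr_eq_sum, dr_eq_sum, Fin.sum_univ_castSucc]
          have hlastdrop : ¬ (0 < (Fin.last (n + 1)).val ∧
              ∀ j : Fin (n + 2), j < Fin.last (n + 1) →
                π (Fin.last (n + 1)) < π j) := by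
            rintro ⟨-, h2⟩
            have := h2 0 (Fin.last_pos)
            rw [hA] at this
            exact (not_lt_of_ge (Fin.le_last _)) this
          rw [if_neg hlastdrop, add_zero]
          refine Finset.sum_congr rfl fun i _ => ?_
          rw [if_congr (hdropiff i) rfl rfl]
          simp
        have hπeq : π = π'.extendDomain (castEquiv n) := by
          apply Equiv.ext
          intro i
          rcases eq_or_lt_of_le (Fin.le_last i) with hi | hi
          · rw [hi, ext_last, hA]
          · have hiv : i.val < n + 1 := by simpa [Fin.lt_def] using hi
            have hie : i = Fin.castSucc ⟨i.val, hiv⟩ := Fin.ext rfl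
            rw [hie, ext_apply, ← hsucc]
        have hsign : (Equiv.Perm.sign π : ℤ) = (Equiv.Perm.sign π' : ℤ) := by
          rw [hπeq, Equiv.Perm.sign_extendDomain]
        have h0 : (π 0).val = (π' 0).val := by
          rw [show (0 : Fin (n + 2)) = Fin.castSucc 0 from rfl, hsucc]
          rfl
        rw [hdr, hsign, h0]
        exact ih π' hmono'
      · -- last value is the minimum, so `π last = 0`
        have hB : π (Fin.last (n + 1)) = 0 := by
          obtain ⟨j, hj⟩ := π.surjective 0
          rcases eq_or_lt_of_le (Fin.le_last j) with hj' | hj'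
          · exact hj' ▸ hj
          · exact absurd (hj ▸ hmin j hj') (Fin.not_lt_zero _)
        have hge : ∀ i : Fin (n + 1), 0 < (π i.castSucc).val := by
          intro i
          have h1 : π i.castSucc ≠ 0 := by
            intro hc
            have := π.injective (hc.trans hB.symm)
            exact absurd this (Fin.castSucc_lt_last i).ne
          have h3 : (π i.castSucc).val ≠ 0 := fun hc => h1 (Fin.ext hc)
          omega
        have hlt : ∀ i : Fin (n + 1), (π i.castSucc).val - 1 < n + 1 := by
          intro i
          have := (π i.castSucc).isLt
          omega
        have hinj : Function.Injective
            (fun i : Fin (n + 1) => (⟨(π i.castSucc).val - 1, hlt i⟩ : Fin (n + 1))) := by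
          intro a b hab
          have h1 := hge a
          have h2 := hge b
          have h3 : (π a.castSucc).val - 1 = (π b.castSucc).val - 1 :=
            congrArg Fin.val hab
          have : π a.castSucc = π b.castSucc := Fin.ext (by omega)
          exact Fin.castSucc_injective _ (π.injective this)
        set π' : Equiv.Perm (Fin (n + 1)) :=
          Equiv.ofBijective _ (Finite.injective_iff_bijective.mp hinj) with hπ'
        have hsucc : ∀ i : Fin (n + 1), π i.castSucc = (π' i).succ := by
          intro i
          have := hge i
          apply Fin.ext
          simp only [Fin.val_succ]
          show (π i.castSucc).val = (π i.castSucc).val - 1 + 1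
          omega
        have hmono' : IsMonotonePerm π' := by
          intro i
          rcases h i.castSucc with hc | hc
          · left; intro j hj
            have := hc j.castSucc (by simpa using hj)
            rw [hsucc, hsucc] at this
            simpa using this
          · right; intro j hj
            have := hc j.castSucc (by simpa using hj)
            rw [hsucc, hsucc] at this
            simpa using this
        have hdropiff : ∀ i : Fin (n + 1),
            ((0 < (i.castSucc).val ∧
                ∀ j : Fin (n + 2), j < i.castSucc → π i.castSucc < π j)
              ↔ (0 < i.val ∧ ∀ j : Fin (n + 1), j < i → π' i < π' j)) := by
          intro i
          constructor
          · rintro ⟨h1, h2⟩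
            refine ⟨h1, fun j hj => ?_⟩
            have := h2 j.castSucc (by simpa using hj)
            rw [hsucc, hsucc] at this
            simpa using this
          · rintro ⟨h1, h2⟩
            refine ⟨h1, fun j hj => ?_⟩
            have hjlt : j.val < n + 1 := by
              have := i.isLt
              have := hj
              rw [Fin.lt_def] at this
              simp at this
              omega
            have hj2 : (⟨j.val, hjlt⟩ : Fin (n + 1)) < i := by
              rw [Fin.lt_def] at hj ⊢
              simpa using hj
            have hres := h2 ⟨j.val, hjlt⟩ hj2
            have hjc : j = Fin.castSucc ⟨j.val, hjlt⟩ := Fin.ext rfl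
            rw [hjc, hsucc, hsucc]
            simpa using hres
        have hdr : dr π = dr π' + (n + 2) := by
          rw [dr_eq_sum, dr_eq_sum, Fin.sum_univ_castSucc]
          have hlastdrop : (0 < (Fin.last (n + 1)).val ∧
              ∀ j : Fin (n + 2), j < Fin.last (n + 1) →
                π (Fin.last (n + 1)) < π j) := by
            refine ⟨by simp, fun j hj => ?_⟩
            rw [hB]
            have h1 : π j ≠ 0 := by
              intro hc
              have := π.injective (hc.trans hB.symm)
              exact absurd this hj.ne
            have h3 : (π j).val ≠ 0 := fun hc => h1 (Fin.ext hc)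
            rw [Fin.lt_def]
            simp
            have h4 : ((0 : Fin (n + 2)) : ℕ) = 0 := rfl
            omega
          rw [if_pos hlastdrop]
          simp only [Fin.val_last]
          congr 1
          refine Finset.sum_congr rfl fun i _ => ?_
          rw [if_congr (hdropiff i) rfl rfl]
          simp
        have hπeq : π = finRotate (n + 2) * π'.extendDomain (castEquiv n) := by
          apply Equiv.ext
          intro i
          rw [Equiv.Perm.mul_apply]
          rcases eq_or_lt_of_le (Fin.le_last i) with hi | hi
          · rw [hi, ext_last, hB, finRotate_succ_apply, Fin.last_add_one]
          · have hiv : i.val < n + 1 := by simpa [Fin.lt_def] using hi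
            have hie : i = Fin.castSucc ⟨i.val, hiv⟩ := Fin.ext rfl
            rw [hie, ext_apply, finRotate_succ_apply, Fin.coeSucc_eq_succ, ← hsucc]
        have hsign : (Equiv.Perm.sign π : ℤ) =
            (-1 : ℤ) ^ (n + 1) * (Equiv.Perm.sign π' : ℤ) := by
          rw [hπeq, map_mul, Equiv.Perm.sign_extendDomain, sign_finRotate]
          push_cast
          ring
        have h0 : (π 0).val = (π' 0).val + 1 := by
          rw [show (0 : Fin (n + 2)) = Fin.castSucc 0 from rfl, hsucc]
          rfl
        rw [hdr, hsign, h0]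
        have hih := ih π' hmono'
        rw [pow_add, hih]
        ring
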